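/- Let K be a field of characteristic p > 0, let a ∈ K with a not in {x^p − x | x ∈ K}, let L = K[X]/(X^p − X − a), let θ be the class of X and θ_k = 1/(θ − k) for k ∈ F_p. Then for every i ∈ F_p with i ≠ 0 one has θ_0 · θ_i = i^{−1}(θ_i − θ_0), and consequently the total number of nonzero coefficients appearing when each product θ_0 · θ_i (for 0 ≤ i ≤ p − 1) is expanded in the basis (θ_0, …, θ_{p−1}) is at most 3p − 2. -/

import Mathlib

open Polynomial


theorem artin_schreier_irred (K : Type*) [Field K] (p : ℕ) [Fact p.Prime] [CharP K p]
    (a : K) (ha : ¬ ∃ x : K, x ^ p - x = a) :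
    Irreducible (X ^ p - X - C a : K[X]) := by
  have hp : p.Prime := Fact.out
  have hp2 : 2 ≤ p := hp.two_le
  set f : K[X] := X ^ p - X - C a with hf
  have hfe : f = X ^ p - (X + C a) := by ring
  have hdeg1 : (X + C a : K[X]).degree ≤ 1 := by
    simpa using degree_linear_le (a := (1:K)) (b := a)
  have hmo : f.Monic := by
    rw [hfe]; exact monic_X_pow_sub (lt_of_le_of_lt hdeg1 (by exact_mod_cast hp2))
  have hnd : f.natDegree = p := by
    rw [hfe]
    have : (X + C a : K[X]).natDegree < (X ^ p : K[X]).natDegree := by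
      simp only [natDegree_X_pow]
      exact lt_of_le_of_lt (natDegree_add_C (p := (X:K[X])) ▸ natDegree_X_le) hp2
    rw [natDegree_sub_eq_left_of_natDegree_lt this, natDegree_X_pow]
  have hf0 : f ≠ 0 := hmo.ne_zero
  set L := f.SplittingField
  set ι := algebraMap K L with hι
  have hinj : Function.Injective ι := ι.injective
  have hsplit : (f.map ι).Splits := SplittingField.splits f
  obtain ⟨β, hβ⟩ := hsplit.exists_eval_eq_zero (by
    rw [degree_map, degree_eq_natDegree hf0, hnd]; exact_mod_cast (by omega : p ≠ 0))
  replace hβ : eval₂ ι β f = 0 := by rwa [eval_map] at hβ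
  have haev : ∀ x : L, aeval x f = x ^ p - x - ι a := by
    intro x; simp [hf, hι]
  have hβ' : β ^ p = β + ι a := by
    have : eval₂ ι β f = 0 := hβ
    simp only [hf, eval₂_sub, eval₂_pow, eval₂_X, eval₂_C] at this
    linear_combination this
  have hint : IsIntegral K β := IsIntegral.of_finite K β
  set m := minpoly K β with hm
  have hmmo : m.Monic := minpoly.monic hint
  have hmdvd : m ∣ f := minpoly.dvd K β (by
    rw [show (aeval β) f = eval₂ ι β f from by rw [aeval_def], hβ])
  set d := m.natDegree with hd
  have hdpos : 0 < d := minpoly.natDegree_pos hint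
  have hdle : d ≤ p := hnd ▸ natDegree_le_of_dvd hmdvd hf0
  -- the map of m splits over L with d roots
  have hmsplits : (m.map ι).Splits :=
    hsplit.of_dvd (Polynomial.map_ne_zero hf0) (Polynomial.map_dvd ι hmdvd)
  set r := (m.map ι).roots with hr
  have hcard : Multiset.card r = d := by
    rw [hr, (splits_iff_card_roots).mp hmsplits, natDegree_map]
  have hroot : ∀ x ∈ r, x ^ p = x + ι a := by
    intro x hx
    have hx0 : aeval x m = 0 := by
      have h := (mem_roots'.mp hx).2
      rw [aeval_def]; simpa [IsRoot, eval_map] using h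
    have hxf : aeval x f = 0 := by
      obtain ⟨q, hq⟩ := hmdvd
      have h := congrArg (aeval x) hq
      rw [map_mul, hx0, zero_mul] at h
      exact h
    rw [haev] at hxf
    linear_combination hxf
  -- sum of roots lies in K
  set s : K := -m.nextCoeff with hs
  have hsum : r.sum = ι s := by
    have := hmsplits.nextCoeff_eq_neg_sum_roots_of_monic (hmmo.map ι)
    rw [nextCoeff_map hinj] at this
    rw [hs, map_neg, this, neg_neg]
  -- key identity : s ^ p = s + d * a
  have hkey : s ^ p = s + d * a := by
    apply hinj
    have hchar : CharP L p := charP_of_injective_ringHom hinj p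
    have e1 : (ι s) ^ p = (r.map (fun x => x ^ p)).sum := by
      rw [← hsum]; exact multiset_sum_pow_char p r
    have e2 : (r.map (fun x => x ^ p)).sum = r.sum + (Multiset.card r) • ι a := by
      have : (r.map (fun x => x ^ p)).sum = (r.map (fun x => x + ι a)).sum :=
        congrArg Multiset.sum (Multiset.map_congr rfl hroot)
      rw [this]
      rw [show (fun x : L => x + ι a) = (fun x => id x + Function.const L (ι a) x) from rfl]
      rw [Multiset.sum_map_add]
      simp [Multiset.map_const, Multiset.sum_replicate]
    rw [map_pow, e1, e2, hcard, hsum, map_add, map_mul]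
    push_cast
    simp [nsmul_eq_mul]
  -- if d < p, contradiction
  have hdp : d = p := by
    by_contra hne
    have hdlt : d < p := lt_of_le_of_ne hdle hne
    have hdK : (d : K) ≠ 0 := by
      intro h0
      exact absurd ((CharP.cast_eq_zero_iff K p d).mp h0)
        (Nat.not_dvd_of_pos_of_lt hdpos hdlt)
    refine absurd ⟨s / d, ?_⟩ ha
    have hdpow : (d : K) ^ p = (d : K) := by
      have h2 : ((d ^ p : ℕ) : ZMod p) = ((d : ℕ) : ZMod p) := by
        push_cast
        exact ZMod.pow_card _
      have h3 : ((d ^ p : ℕ) : K) = ((d : ℕ) : K) :=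
        (CharP.natCast_eq_natCast K p).mpr ((ZMod.natCast_eq_natCast_iff _ _ _).mp h2)
      push_cast at h3
      exact h3
    rw [div_pow, hdpow, hkey, ← sub_div, add_sub_cancel_left,
      mul_div_cancel_left₀ a hdK]
  -- conclude f = m
  have hfm : f = m := by
    obtain ⟨q, hq⟩ := hmdvd
    have hq0 : q ≠ 0 := fun h => hf0 (by rw [hq, h, mul_zero])
    have h1 : f.natDegree = m.natDegree + q.natDegree := by
      rw [hq]; exact natDegree_mul hmmo.ne_zero hq0
    have hdq : q.natDegree = 0 := by omega
    have hql : q.leadingCoeff = 1 := by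
      have h2 := hmo.leadingCoeff
      rw [hq, leadingCoeff_mul, hmmo.leadingCoeff, one_mul] at h2
      exact h2
    have hq1 : q = 1 := by
      rw [eq_C_of_natDegree_eq_zero hdq]
      rw [leadingCoeff, hdq] at hql
      rw [hql, map_one]
    rw [hq, hq1, mul_one]
  rw [hfm]
  exact minpoly.irreducible hint


theorem as_helper {K L : Type*} [Field K] [Field L] [Algebra K L]
    (p : ℕ) [Fact p.Prime] [CharP K p] (a : K) (ha : ¬ ∃ x : K, x ^ p - x = a)
    (θ : L) (hθrel : θ ^ p - θ = algebraMap K L a)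
    (Θ : ZMod p → L)
    (hΘ : ∀ k : ZMod p, Θ k = (θ - algebraMap K L (ZMod.castHom (dvd_refl p) K k))⁻¹) :
    (∀ i : ZMod p, i ≠ 0 →
      Θ 0 * Θ i = algebraMap K L (ZMod.castHom (dvd_refl p) K i⁻¹) * (Θ i - Θ 0)) ∧
    ∀ B : Module.Basis (ZMod p) K L, (∀ k : ZMod p, B k = Θ k) →
      ∑ i : ZMod p, (B.repr (Θ 0 * Θ i)).support.card ≤ 3 * p - 2 := by
  have hp : p.Prime := Fact.out
  set ι := algebraMap K L with hι
  set c : ZMod p →+* K := ZMod.castHom (dvd_refl p) K with hc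
  have hinj : Function.Injective ι := ι.injective
  have hne : ∀ k : ZMod p, θ - ι (c k) ≠ 0 := by
    intro k h0
    have hθk : θ = ι (c k) := by linear_combination h0
    rw [hθk, ← map_pow, ← map_sub] at hθrel
    exact ha ⟨c k, hinj hθrel⟩
  have key : ∀ i : ZMod p, i ≠ 0 →
      Θ 0 * Θ i = ι (c i⁻¹) * (Θ i - Θ 0) := by
    intro i hi
    have h0 : Θ 0 = θ⁻¹ := by rw [hΘ 0]; simp
    have hiK : Θ i = (θ - ι (c i))⁻¹ := hΘ i
    have hu : θ ≠ 0 := by simpa using hne 0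
    have hv : θ - ι (c i) ≠ 0 := hne i
    have hci : ι (c i⁻¹) * ι (c i) = 1 := by
      rw [← map_mul, ← map_mul, inv_mul_cancel₀ hi, map_one, map_one]
    have hw : θ - (θ - ι (c i)) = ι (c i) := by ring
    rw [h0, hiK, inv_sub_inv hv hu, hw, div_eq_mul_inv, ← mul_assoc, hci, one_mul,
      mul_inv]
    exact mul_comm _ _
  refine ⟨key, ?_⟩
  intro B hB
  have hcard : ∀ i : ZMod p, i ≠ 0 → (B.repr (Θ 0 * Θ i)).support.card ≤ 2 := by
    intro i hi
    have hrepr : B.repr (Θ 0 * Θ i) =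
        (c i⁻¹) • (Finsupp.single i 1 - Finsupp.single 0 1) := by
      rw [key i hi, ← Algebra.smul_def, map_smul, map_sub, ← hB i, ← hB 0,
        B.repr_self, B.repr_self]
    rw [hrepr]
    calc ((c i⁻¹) • (Finsupp.single i (1:K) - Finsupp.single 0 1)).support.card
        ≤ ((Finsupp.single i (1:K) - Finsupp.single 0 1)).support.card :=
          Finset.card_le_card (Finsupp.support_smul)
      _ ≤ ((Finsupp.single i (1:K)).support ∪ (Finsupp.single 0 (1:K)).support).card :=
          Finset.card_le_card (Finsupp.support_sub)
      _ ≤ (Finsupp.single i (1:K)).support.card + (Finsupp.single 0 (1:K)).support.card :=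
          Finset.card_union_le _ _
      _ ≤ 2 := by
          have h1 := Finset.card_le_card (Finsupp.support_single_subset (a := i) (b := (1:K)))
          have h2 := Finset.card_le_card
            (Finsupp.support_single_subset (a := (0:ZMod p)) (b := (1:K)))
          rw [Finset.card_singleton] at h1 h2
          omega
  have h0card : (B.repr (Θ 0 * Θ 0)).support.card ≤ p := by
    calc (B.repr (Θ 0 * Θ 0)).support.card ≤ Fintype.card (ZMod p) :=
          Finset.card_le_univ _
      _ = p := ZMod.card p
  have hsum : ∑ i : ZMod p, (B.repr (Θ 0 * Θ i)).support.card
      = (B.repr (Θ 0 * Θ 0)).support.card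
        + ∑ i ∈ Finset.univ.erase 0, (B.repr (Θ 0 * Θ i)).support.card :=
    (Finset.add_sum_erase _ _ (Finset.mem_univ 0)).symm
  rw [hsum]
  have hbound : ∑ i ∈ Finset.univ.erase 0, (B.repr (Θ 0 * Θ i)).support.card
      ≤ (Finset.univ.erase (0 : ZMod p)).card * 2 := by
    apply Finset.sum_le_card_nsmul
    intro x hx
    exact hcard x (Finset.ne_of_mem_erase hx)
  have hec : (Finset.univ.erase (0 : ZMod p)).card = p - 1 := by
    rw [Finset.card_erase_of_mem (Finset.mem_univ 0), Finset.card_univ, ZMod.card]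
  rw [hec] at hbound
  have hp2 : 2 ≤ p := hp.two_le
  omega

/-- In the Artin–Schreier normal basis `θ_k = 1/(θ - k)`, one has
`θ_0 · θ_i = i⁻¹ (θ_i - θ_0)` for `i ≠ 0`, and the total number of nonzero
coefficients of the products `θ_0 · θ_i` in the basis `(θ_0, …, θ_{p-1})`
is at most `3p - 2`. -/
theorem stmt_2 (K : Type*) [Field K] (p : ℕ) [Fact p.Prime] [CharP K p]
    (a : K) (ha : ¬ ∃ x : K, x ^ p - x = a) :
    ∃ hirr : Irreducible (X ^ p - X - C a : K[X]),
      letI : Fact (Irreducible (X ^ p - X - C a : K[X])) := ⟨hirr⟩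
      ∀ Θ : ZMod p → AdjoinRoot (X ^ p - X - C a : K[X]),
        (∀ k : ZMod p, Θ k =
          (AdjoinRoot.root (X ^ p - X - C a : K[X]) -
            algebraMap K (AdjoinRoot (X ^ p - X - C a : K[X]))
              (ZMod.castHom (dvd_refl p) K k))⁻¹) →
        (∀ i : ZMod p, i ≠ 0 →
          Θ 0 * Θ i =
            algebraMap K (AdjoinRoot (X ^ p - X - C a : K[X]))
              (ZMod.castHom (dvd_refl p) K i⁻¹) * (Θ i - Θ 0)) ∧
        ∀ B : Module.Basis (ZMod p) K (AdjoinRoot (X ^ p - X - C a : K[X])),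
          (∀ k : ZMod p, B k = Θ k) →
          ∑ i : ZMod p, (B.repr (Θ 0 * Θ i)).support.card ≤ 3 * p - 2 := by
  have hirr := artin_schreier_irred K p a ha
  refine ⟨hirr, ?_⟩
  haveI : Fact (Irreducible (X ^ p - X - C a : K[X])) := ⟨hirr⟩
  intro Θ hΘ
  have hrel : (AdjoinRoot.root (X ^ p - X - C a : K[X])) ^ p
      - AdjoinRoot.root (X ^ p - X - C a : K[X])
      = algebraMap K (AdjoinRoot (X ^ p - X - C a : K[X])) a := by
    have h := AdjoinRoot.eval₂_root (X ^ p - X - C a : K[X])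
    simp only [eval₂_sub, eval₂_pow, eval₂_X, eval₂_C] at h
    rw [AdjoinRoot.algebraMap_eq]
    linear_combination h
  exact as_helper p a ha _ hrel Θ hΘ
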